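/- If R and S are multiple relations and L ⊆ I satisfies J_R ∩ J_S ⊆ L ⊆ J_R ∪ J_S, then (R ⋈ S)|L = R|(L ∩ J_R) ⋈ S|(L ∩ J_S). In particular this holds for every L ⊆ J_R ∪ J_S when J_R ∩ J_S = ∅. -/

import Mathlib

open Classical

variable {I : Type*}

/-- A `J`-family: a choice of an element of `E j` for each `j ∈ J`. -/
abbrev Fam (E : I → Type*) (J : Set I) : Type _ := ∀ j : J, E j

/-- Restriction of a `J`-family to a subset `K ⊆ J`. -/
def restrictFam {E : I → Type*} {J K : Set I} (h : K ⊆ J) (x : Fam E J) : Fam E K :=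
  fun k => x ⟨k.1, h k.2⟩

/-- Transport of a family along an equality of index sets. -/
def castFam {E : I → Type*} {J K : Set I} (h : J = K) (x : Fam E J) : Fam E K :=
  h ▸ x

/-- Two families are compatible if they agree on the intersection of their domains. -/
def Compatible {E : I → Type*} {J K : Set I} (x : Fam E J) (y : Fam E K) : Prop :=
  ∀ (i : I) (hJ : i ∈ J) (hK : i ∈ K), x ⟨i, hJ⟩ = y ⟨i, hK⟩

/-- The sum (merge) of two families: the `J ∪ K`-family restricting to `x` on `J`
(and, when `x` and `y` are compatible, to `y` on `K`). -/
noncomputable def merge {E : I → Type*} {J K : Set I} (x : Fam E J) (y : Fam E K) :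
    Fam E (J ∪ K) :=
  fun i => if h : i.1 ∈ J then x ⟨i.1, h⟩ else y ⟨i.1, i.2.resolve_left h⟩

/-- A multiple relation: a domain `dom ⊆ I` together with a graph of `dom`-families. -/
structure MRel (E : I → Type*) where
  dom : Set I
  graph : Set (Fam E dom)

/-- The join of two multiple relations. -/
def MRel.join {E : I → Type*} (R S : MRel E) : MRel E where
  dom := R.dom ∪ S.dom
  graph := {x | restrictFam Set.subset_union_left x ∈ R.graph ∧
    restrictFam Set.subset_union_right x ∈ S.graph}

/-- The restriction of a multiple relation to a subset `K` of its domain. -/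
def MRel.restr {E : I → Type*} (R : MRel E) (K : Set I) (h : K ⊆ R.dom) : MRel E :=
  ⟨K, restrictFam h '' R.graph⟩

/-- The full (trivial) relation on `J`. -/
def MRel.full (E : I → Type*) (J : Set I) : MRel E := ⟨J, Set.univ⟩

/-- Inclusion of multiple relations: equal domains and inclusion of graphs. -/
def MRel.le {E : I → Type*} (R S : MRel E) : Prop :=
  ∃ h : R.dom = S.dom, ∀ x ∈ R.graph, castFam h x ∈ S.graph

lemma castFam_apply {E : I → Type*} {J K : Set I} (h : J = K) (x : Fam E J) (i : I)
    (hi : i ∈ K) : castFam h x ⟨i, hi⟩ = x ⟨i, h.symm ▸ hi⟩ := by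
  subst h; rfl

lemma mrel_ext {E : I → Type*} {R S : MRel E} (h : R.dom = S.dom)
    (h2 : ∀ x, x ∈ R.graph ↔ castFam h x ∈ S.graph) : R = S := by
  obtain ⟨d1, g1⟩ := R; obtain ⟨d2, g2⟩ := S
  dsimp at h; subst h
  simp only [MRel.mk.injEq, heq_eq_eq, true_and]
  ext x
  simpa [castFam] using h2 x

theorem stmt9 {E : I → Type*} :
    (∀ (R S : MRel E) (L : Set I) (hL : L ⊆ R.dom ∪ S.dom),
      R.dom ∩ S.dom ⊆ L →
        (R.join S).restr L hL =
          (R.restr (L ∩ R.dom) Set.inter_subset_right).join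
            (S.restr (L ∩ S.dom) Set.inter_subset_right)) ∧
    (∀ (R S : MRel E), R.dom ∩ S.dom = ∅ →
      ∀ (L : Set I) (hL : L ⊆ R.dom ∪ S.dom),
        (R.join S).restr L hL =
          (R.restr (L ∩ R.dom) Set.inter_subset_right).join
            (S.restr (L ∩ S.dom) Set.inter_subset_right)) := by
  have main : ∀ (R S : MRel E) (L : Set I) (hL : L ⊆ R.dom ∪ S.dom),
      R.dom ∩ S.dom ⊆ L →
        (R.join S).restr L hL =
          (R.restr (L ∩ R.dom) Set.inter_subset_right).join
            (S.restr (L ∩ S.dom) Set.inter_subset_right) := by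
    intro R S L hL hRS
    have hdom : L = (L ∩ R.dom) ∪ (L ∩ S.dom) := by
      rw [← Set.inter_union_distrib_left]
      exact (Set.inter_eq_left.mpr hL).symm
    refine mrel_ext hdom ?_
    intro x
    constructor
    · rintro ⟨y, ⟨hyR, hyS⟩, rfl⟩
      constructor
      · refine ⟨restrictFam Set.subset_union_left y, hyR, ?_⟩
        funext i
        simp only [restrictFam]
        erw [castFam_apply]
        rfl
      · refine ⟨restrictFam Set.subset_union_right y, hyS, ?_⟩
        funext i
        simp only [restrictFam]
        erw [castFam_apply]
        rfl
    · rintro ⟨⟨a, ha, hax⟩, ⟨b, hb, hbx⟩⟩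
      refine ⟨merge a b, ⟨?_, ?_⟩, ?_⟩
      · have : restrictFam (Set.subset_union_left : R.dom ⊆ R.dom ∪ S.dom)
            (merge a b) = a := by
          funext i
          simp only [restrictFam, merge, dif_pos i.2]
        rw [this]; exact ha
      · have : restrictFam (Set.subset_union_right : S.dom ⊆ R.dom ∪ S.dom)
            (merge a b) = b := by
          funext i
          by_cases h : i.1 ∈ R.dom
          · have hiL : i.1 ∈ L := hRS ⟨h, i.2⟩
            have e1 : a ⟨i.1, h⟩ = castFam hdom x ⟨i.1, Or.inl ⟨hiL, h⟩⟩ :=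
              congrFun hax ⟨i.1, ⟨hiL, h⟩⟩
            have e2 : b ⟨i.1, i.2⟩ = castFam hdom x ⟨i.1, Or.inr ⟨hiL, i.2⟩⟩ :=
              congrFun hbx ⟨i.1, ⟨hiL, i.2⟩⟩
            simp only [restrictFam, merge, dif_pos h]
            rw [e1, e2]
          · simp only [restrictFam, merge, dif_neg h]
        rw [this]; exact hb
      · funext i
        have hiU : i.1 ∈ R.dom ∪ S.dom := hL i.2
        by_cases h : i.1 ∈ R.dom
        · have e1 : a ⟨i.1, h⟩ = castFam hdom x ⟨i.1, Or.inl ⟨i.2, h⟩⟩ :=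
            congrFun hax ⟨i.1, ⟨i.2, h⟩⟩
          simp only [restrictFam, merge, dif_pos h]
          erw [e1, castFam_apply]
        · have hS : i.1 ∈ S.dom := hiU.resolve_left h
          have e2 : b ⟨i.1, hS⟩ = castFam hdom x ⟨i.1, Or.inr ⟨i.2, hS⟩⟩ :=
            congrFun hbx ⟨i.1, ⟨i.2, hS⟩⟩
          simp only [restrictFam, merge, dif_neg h]
          erw [e2, castFam_apply]
  refine ⟨main, fun R S hRS L hL => main R S L hL (by rw [hRS]; exact Set.empty_subset L)⟩
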